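/- Let ψ : [0,∞) → ℝ be continuous with ψ(0) = 0, three times differentiable on (0,∞) with ψ''' ≥ 0 on (0, 2]. Then for all r > 0 with 2r ≤ 2, ψ(2r) − 2ψ(r) ≤ ψ''(2r) · r². -/

import Mathlib

/-- If `ψ` is continuous on `[0,∞)` with `ψ 0 = 0`, three times differentiable
on `(0,∞)` with `ψ''' ≥ 0` on `(0,2]`, then for `r > 0` with `2r ≤ 2` one has
`ψ(2r) − 2ψ(r) ≤ ψ''(2r) r²`. -/
theorem stmt5 (ψ : ℝ → ℝ)
    (hcont : ContinuousOn ψ (Set.Ici 0))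
    (hψ0 : ψ 0 = 0)
    (hdiff : ∀ x > (0:ℝ), DifferentiableAt ℝ ψ x)
    (hdiff2 : ∀ x > (0:ℝ), DifferentiableAt ℝ (deriv ψ) x)
    (hdiff3 : ∀ x > (0:ℝ), DifferentiableAt ℝ (deriv (deriv ψ)) x)
    (hthird : ∀ x, 0 < x → x ≤ 2 → 0 ≤ deriv (deriv (deriv ψ)) x) :
    ∀ r : ℝ, 0 < r → 2 * r ≤ 2 →
      ψ (2 * r) - 2 * ψ r ≤ deriv (deriv ψ) (2 * r) * r ^ 2 := by
  intro r hr hr2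
  -- monotonicity of ψ'' on (0,2]
  have mono2 : ∀ a b : ℝ, 0 < a → a ≤ b → b ≤ 2 →
      deriv (deriv ψ) a ≤ deriv (deriv ψ) b := by
    intro a b ha hab hb2
    rcases eq_or_lt_of_le hab with rfl | hab
    · exact le_refl _
    · obtain ⟨c, hc, hceq⟩ := exists_hasDerivAt_eq_slope (deriv (deriv ψ))
        (deriv (deriv (deriv ψ))) hab
        (fun x hx => ((hdiff3 x (lt_of_lt_of_le ha hx.1)).continuousAt.continuousWithinAt))
        (fun x hx => (hdiff3 x (lt_trans ha hx.1)).hasDerivAt)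
      have hc0 : 0 < c := lt_trans ha hc.1
      have hc2 : c ≤ 2 := le_trans hc.2.le hb2
      have h3 := hthird c hc0 hc2
      rw [hceq] at h3
      have := mul_nonneg h3 (sub_nonneg.mpr hab.le)
      rw [div_mul_cancel₀ _ (sub_ne_zero.mpr (ne_of_gt (by linarith : a < b)))] at this
      linarith
  -- Step B: for s in (0,r), ψ'(s+r) - ψ'(s) ≤ ψ''(2r) * r
  have stepB : ∀ s ∈ Set.Ioo (0:ℝ) r,
      deriv ψ (s + r) - deriv ψ s ≤ deriv (deriv ψ) (2 * r) * r := by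
    intro s hs
    obtain ⟨c, hc, hceq⟩ := exists_hasDerivAt_eq_slope (deriv ψ) (deriv (deriv ψ))
      (by linarith [hs.1] : s < s + r)
      (fun x hx => ((hdiff2 x (lt_of_lt_of_le hs.1 hx.1)).continuousAt.continuousWithinAt))
      (fun x hx => (hdiff2 x (lt_trans hs.1 hx.1)).hasDerivAt)
    have hc0 : 0 < c := lt_trans hs.1 hc.1
    have hc2r : c ≤ 2 * r := by
      have := hc.2
      have := hs.2
      linarith
    have hle := mono2 c (2 * r) hc0 hc2r hr2
    have hrr : s + r - s = r := by ring
    rw [hrr] at hceq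
    have : deriv ψ (s + r) - deriv ψ s = deriv (deriv ψ) c * r := by
      rw [eq_div_iff (ne_of_gt hr)] at hceq
      linarith
    rw [this]
    exact mul_le_mul_of_nonneg_right hle hr.le
  -- Step C: MVT for h x = ψ (x + r) - ψ x on [0, r]
  set h : ℝ → ℝ := fun x => ψ (x + r) - ψ x with hh
  have hconth : ContinuousOn h (Set.Icc 0 r) := by
    apply ContinuousOn.sub
    · apply ContinuousOn.comp hcont (by fun_prop)
      intro x hx
      simp only [Set.mem_Ici]
      linarith [hx.1]
    · exact hcont.mono (fun x hx => hx.1)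
  have hderivh : ∀ x ∈ Set.Ioo (0:ℝ) r,
      HasDerivAt h (deriv ψ (x + r) - deriv ψ x) x := by
    intro x hx
    have h1 : HasDerivAt (fun y => ψ (y + r)) (deriv ψ (x + r)) x := by
      have := ((hdiff (x + r) (by linarith [hx.1])).hasDerivAt).comp x
        ((hasDerivAt_id x).add_const r)
      simp at this
      exact this
    exact h1.sub ((hdiff x hx.1).hasDerivAt)
  obtain ⟨c, hc, hceq⟩ := exists_hasDerivAt_eq_slope h
    (fun x => deriv ψ (x + r) - deriv ψ x) hr hconth hderivh
  have hB := stepB c hc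
  rw [hceq] at hB
  have hhr : h r = ψ (2 * r) - ψ r := by simp [hh]; ring_nf
  have hh0 : h 0 = ψ r := by simp [hh, hψ0]
  rw [hhr, hh0, sub_zero] at hB
  have := mul_le_mul_of_nonneg_right hB hr.le
  rw [div_mul_cancel₀ _ (ne_of_gt hr)] at this
  calc ψ (2 * r) - 2 * ψ r = (ψ (2 * r) - ψ r - ψ r) := by ring
    _ ≤ deriv (deriv ψ) (2 * r) * r * r := this
    _ = deriv (deriv ψ) (2 * r) * r ^ 2 := by ring
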